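/- Let S₃ = ⟨d₁,d₂,d₃⟩ be a numerical semigroup minimally generated by three positive integers with d₁ ≥ 4, and suppose ρ₃ = (d₁+d₂+d₃)/√(d₁d₂d₃) < 2/√3 (equivalently 3·(d₁+d₂+d₃)² < 4·d₁d₂d₃). Then e₃ = δ₁/c₃ < 1, i.e. d₁+d₂+d₃ − 1 < 2·(F₃+1). -/
import Mathlib


/-- A numerical semigroup: a subset of ℕ containing 0, closed under addition,
with finite complement (the set of gaps). -/
def IsNumericalSemigroup (S : Set ℕ) : Prop :=
  0 ∈ S ∧ (∀ a ∈ S, ∀ b ∈ S, a + b ∈ S) ∧ (Sᶜ : Set ℕ).Finite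

/-- The genus: the number of gaps of `S`. -/
noncomputable def genus (S : Set ℕ) : ℕ := (Sᶜ : Set ℕ).ncard

/-- The Frobenius number: the largest gap of `S`. -/
noncomputable def frobeniusNum (S : Set ℕ) : ℕ := sSup (Sᶜ : Set ℕ)

/-- The conductorNum: the least `c` such that every `n ≥ c` belongs to `S`
(equal to `frobeniusNum S + 1` when `S ≠ ℕ`). -/
noncomputable def conductorNum (S : Set ℕ) : ℕ := sInf {c : ℕ | ∀ n : ℕ, c ≤ n → n ∈ S}

/-- `S` is symmetric: for every `n` with `0 ≤ n ≤ F` (where `F = conductorNum S - 1` is the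
Frobenius number), `n` is a gap iff `F - n ∈ S`. -/
def IsSymmetric (S : Set ℕ) : Prop :=
  ∀ n : ℕ, n < conductorNum S → (n ∉ S ↔ conductorNum S - 1 - n ∈ S)

/-- The submonoid of ℕ generated by two elements. -/
def gen2 (x y : ℕ) : Set ℕ := {n : ℕ | ∃ a b : ℕ, n = a * x + b * y}

/-- The numerical semigroup `⟨d₁, d₂, d₃⟩` generated by three elements. -/
def gen3 (d₁ d₂ d₃ : ℕ) : Set ℕ := {n : ℕ | ∃ a b c : ℕ, n = a * d₁ + b * d₂ + c * d₃}

/-- `⟨d₁, d₂, d₃⟩` is minimally generated by the three positive integers `d₁ < d₂ < d₃`: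
`gcd(d₁,d₂,d₃) = 1`, `3 ≤ d₁`, `d₃ ≤ d₁d₂ - d₁ - d₂`, and no generator lies in the
submonoid generated by the other two. -/
def MinGen3 (d₁ d₂ d₃ : ℕ) : Prop :=
  3 ≤ d₁ ∧ d₁ < d₂ ∧ d₂ < d₃ ∧ d₃ + d₁ + d₂ ≤ d₁ * d₂ ∧
    Nat.gcd d₁ (Nat.gcd d₂ d₃) = 1 ∧
    d₁ ∉ gen2 d₂ d₃ ∧ d₂ ∉ gen2 d₁ d₃ ∧ d₃ ∉ gen2 d₁ d₂

/-- The `r`-th gap power sum (higher genus) `G_r = Σ_{s gap} s^r`. -/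
noncomputable def gapPowerSum (S : Set ℕ) (r : ℕ) : ℕ := ∑ᶠ s ∈ (Sᶜ : Set ℕ), s ^ r

/-- If `S₃ = ⟨d₁,d₂,d₃⟩` is minimally generated with `d₁ ≥ 4` and
`ρ₃ = σ₁/√π₃ < 2/√3` (equivalently `3σ₁² < 4π₃`), then `e₃ = δ₁/c₃ < 1`,
i.e. `d₁+d₂+d₃ − 1 < 2·(F₃+1)`. -/
lemma zmod_solve (t m v : ℕ) (hm : 0 < m) (hco : Nat.Coprime t m) :
    ∃ k, k < m ∧ t * k ≡ v [MOD m] := by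
  haveI : NeZero m := ⟨hm.ne'⟩
  refine ⟨((t : ZMod m)⁻¹ * v).val, ZMod.val_lt _, ?_⟩
  have h1 : ((t * ((t : ZMod m)⁻¹ * (v : ZMod m)).val : ℕ) : ZMod m) = ((v : ℕ) : ZMod m) := by
    push_cast
    rw [ZMod.natCast_rightInverse _, ← mul_assoc, ZMod.coe_mul_inv_eq_one t hco, one_mul]
  exact (ZMod.natCast_eq_natCast_iff _ _ _).mp h1

lemma repr_coprime (b c n : ℕ) (hb : 0 < b) (hc : 0 < c) (hco : Nat.Coprime b c)
    (hn : b * c ≤ n) : ∃ x y, n = b * x + c * y := by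
  obtain ⟨x, hx, hmod⟩ := zmod_solve b c n hc hco
  have hx1 : b * x + b ≤ b * c := by
    have h2 : b * (x + 1) ≤ b * c := Nat.mul_le_mul_left b hx
    have h3 : b * (x + 1) = b * x + b := by ring
    omega
  have hle : b * x ≤ n := by omega
  have hdvd : c ∣ n - b * x := (Nat.modEq_iff_dvd' hle).mp hmod
  obtain ⟨y, hy⟩ := hdvd
  exact ⟨x, y, by omega⟩

lemma repr_gcd (b c n : ℕ) (hb : 0 < b) (hc : 0 < c) (hdvd : Nat.gcd b c ∣ n)
    (hn : b * c ≤ n) : ∃ x y, n = b * x + c * y := by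
  set g := Nat.gcd b c with hg
  have hgpos : 0 < g := Nat.gcd_pos_of_pos_left _ hb
  obtain ⟨n', hn'⟩ := hdvd
  obtain ⟨b', hb'⟩ := Nat.gcd_dvd_left b c
  obtain ⟨c', hc'⟩ := Nat.gcd_dvd_right b c
  have hb'pos : 0 < b' := by
    rcases Nat.eq_zero_or_pos b' with h | h
    · subst h; simp at hb'; omega
    · exact h
  have hc'pos : 0 < c' := by
    rcases Nat.eq_zero_or_pos c' with h | h
    · subst h; simp at hc'; omega
    · exact h
  have e1 : b / g = b' := Nat.div_eq_of_eq_mul_right hgpos hb'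
  have e2 : c / g = c' := Nat.div_eq_of_eq_mul_right hgpos hc'
  have hco : Nat.Coprime b' c' := by
    have h := Nat.coprime_div_gcd_div_gcd (m := b) (n := c) hgpos
    rwa [e1, e2] at h
  have hle : b' * c' ≤ n' := by
    have h1 : g * (g * (b' * c')) ≤ g * n' := by
      calc g * (g * (b' * c')) = (g * b') * (g * c') := by ring
        _ = b * c := by rw [← hb', ← hc']
        _ ≤ n := hn
        _ = g * n' := hn'
    have h2 : g * (b' * c') ≤ n' := Nat.le_of_mul_le_mul_left h1 hgpos
    calc b' * c' ≤ g * (b' * c') := Nat.le_mul_of_pos_left _ hgpos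
      _ ≤ n' := h2
  obtain ⟨x, y, hxy⟩ := repr_coprime b' c' n' hb'pos hc'pos hco hle
  refine ⟨x, y, ?_⟩
  calc n = g * n' := hn'
    _ = g * (b' * x + c' * y) := by rw [hxy]
    _ = (g * b') * x + (g * c') * y := by ring
    _ = b * x + c * y := by rw [← hb', ← hc']

def aval (b c : ℕ) (p : ℕ × ℕ) : ℕ := b * p.1 + c * p.2

def aprec (b c : ℕ) (p q : ℕ × ℕ) : Prop :=
  aval b c p < aval b c q ∨ (aval b c p = aval b c q ∧ p.1 < q.1)

def ADset (a b c : ℕ) : Set (ℕ × ℕ) :=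
  {p | ∀ q, aval b c q % a = aval b c p % a → q = p ∨ aprec b c p q}

lemma aval_fst_le (b c : ℕ) (hb : 0 < b) (p : ℕ × ℕ) : p.1 ≤ aval b c p := by
  have : p.1 ≤ b * p.1 := Nat.le_mul_of_pos_left _ hb
  simp only [aval]; omega

lemma exists_min (b c : ℕ) (hb : 0 < b) (hc : 0 < c) (C : Set (ℕ × ℕ)) (hne : C.Nonempty) :
    ∃ p ∈ C, ∀ q ∈ C, q = p ∨ aprec b c p q := by
  classical
  set key : ℕ × ℕ → ℕ := fun q => aval b c q * (aval b c q + 1) + q.1 with hkeydef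
  have keymono : ∀ p q : ℕ × ℕ, aval b c q < aval b c p ∨
      (aval b c q = aval b c p ∧ q.1 < p.1) → key q < key p := by
    intro p q h
    have h1 := aval_fst_le b c hb q
    simp only [hkeydef]
    rcases h with h | ⟨h, h2⟩
    · nlinarith
    · nlinarith
  set K : Set ℕ := key '' C with hK
  have hKne : K.Nonempty := hne.image _
  have hmem := Nat.sInf_mem hKne
  obtain ⟨p, hpC, hpk⟩ := hmem
  refine ⟨p, hpC, ?_⟩
  intro q hqC
  have h1 : key p ≤ key q := by
    rw [hpk]; exact Nat.sInf_le ⟨q, hqC, rfl⟩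
  rcases Nat.lt_trichotomy (aval b c p) (aval b c q) with h | h | h
  · exact Or.inr (Or.inl h)
  · rcases Nat.lt_trichotomy p.1 q.1 with h2 | h2 | h2
    · exact Or.inr (Or.inr ⟨h, h2⟩)
    · left
      have h3 : p.2 = q.2 := by
        simp only [aval] at h
        rw [h2] at h
        have := Nat.eq_of_mul_eq_mul_left hc (by omega : c * p.2 = c * q.2)
        omega
      exact Prod.ext h2.symm h3.symm
    · exact absurd (keymono p q (Or.inr ⟨h.symm, h2⟩)) (by omega)
  · exact absurd (keymono p q (Or.inl h)) (by omega)

lemma min_mem_ADset (a b c : ℕ) (p : ℕ × ℕ) (C : Set (ℕ × ℕ))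
    (hC : C = {q | aval b c q % a = aval b c p % a}) (hpC : p ∈ C)
    (hmin : ∀ q ∈ C, q = p ∨ aprec b c p q) : p ∈ ADset a b c := by
  intro q hq
  exact hmin q (by rw [hC]; exact hq)

lemma swap_lemma (a b c : ℕ) (X Z U : ℕ × ℕ) (hX : X ∈ ADset a b c)
    (hprec : aprec b c U Z) (hcong : aval b c U % a = aval b c Z % a)
    (h1 : Z.1 ≤ X.1 + U.1) (h2 : Z.2 ≤ X.2 + U.2) : False := by
  set X' : ℕ × ℕ := (X.1 + U.1 - Z.1, X.2 + U.2 - Z.2) with hX'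
  have hsum : aval b c X' + aval b c Z = aval b c X + aval b c U := by
    simp only [aval, hX']
    zify [h1, h2]
    ring
  have hUZ : aval b c U ≤ aval b c Z := by
    rcases hprec with h | ⟨h, _⟩ <;> omega
  have hcong' : aval b c X' % a = aval b c X % a := by
    have h3 : aval b c X' + aval b c U ≡ aval b c X + aval b c U [MOD a] := by
      calc aval b c X' + aval b c U ≡ aval b c X' + aval b c Z [MOD a] :=
            Nat.ModEq.add_left _ hcong
        _ = aval b c X + aval b c U := hsum
    exact Nat.ModEq.add_right_cancel' _ h3
  have hprec' : aprec b c X' X := by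
    rcases hprec with h | ⟨h, hx⟩
    · left; omega
    · right
      constructor
      · omega
      · simp only [hX']; omega
  have hX'1 : X'.1 = X.1 + U.1 - Z.1 := rfl
  have hX'2 : X'.2 = X.2 + U.2 - Z.2 := rfl
  rcases hX X' hcong' with h | h
  · rw [h] at hprec'
    rcases hprec' with h' | ⟨_, h'⟩ <;> omega
  · rcases hprec' with h' | ⟨h', hx'⟩ <;> rcases h with h'' | ⟨h'', hx''⟩ <;> omega

lemma adset_downward (a b c : ℕ) (p q : ℕ × ℕ) (hp : p ∈ ADset a b c)
    (h1 : q.1 ≤ p.1) (h2 : q.2 ≤ p.2) : q ∈ ADset a b c := by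
  obtain ⟨dx, hdx⟩ : ∃ dx, p.1 = q.1 + dx := ⟨p.1 - q.1, by omega⟩
  obtain ⟨dy, hdy⟩ : ∃ dy, p.2 = q.2 + dy := ⟨p.2 - q.2, by omega⟩
  intro t ht
  set t' : ℕ × ℕ := (t.1 + dx, t.2 + dy) with ht'
  have hvt' : aval b c t' = aval b c t + (b * dx + c * dy) := by
    simp only [aval, ht']; ring
  have hvp : aval b c p = aval b c q + (b * dx + c * dy) := by
    simp only [aval]; rw [hdx, hdy]; ring
  have hcong : aval b c t' % a = aval b c p % a := by
    rw [hvt', hvp]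
    exact Nat.ModEq.add_right _ ht
  rcases hp t' hcong with h | h
  · left
    have e1 : t'.1 = p.1 := by rw [h]
    have e2 : t'.2 = p.2 := by rw [h]
    simp only [ht'] at e1 e2
    exact Prod.ext (by omega) (by omega)
  · right
    rcases h with h | ⟨h, hx⟩
    · left; omega
    · right
      refine ⟨by omega, ?_⟩
      simp only [ht'] at hx
      omega

lemma apery_bound (a b c F : ℕ) (ha : 0 < a)
    (hS : ∀ n, F < n → n ∈ gen3 a b c) (p : ℕ × ℕ) (hp : p ∈ ADset a b c) :
    aval b c p ≤ F + a := by
  by_contra hcon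
  push_neg at hcon
  have h1 : F < aval b c p - a := by omega
  obtain ⟨x, y, z, hxyz⟩ := hS _ h1
  set q : ℕ × ℕ := (y, z) with hq
  have hvq : aval b c q = y * b + z * c := by simp only [aval, hq]; ring
  have hcong : aval b c q % a = aval b c p % a := by
    have e : aval b c p = aval b c q + (x + 1) * a := by
      have h5 : aval b c p - a = x * a + y * b + z * c := hxyz
      have h6 : (x + 1) * a = x * a + a := by ring
      omega
    rw [e]
    exact (Nat.add_mul_mod_self_right _ _ _).symm
  have hlt : aval b c q < aval b c p := by omega
  rcases hp q hcong with h | h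
  · rw [h] at hlt; omega
  · rcases h with h | ⟨h, _⟩ <;> omega

lemma no_three (a b c : ℕ) (hb : 0 < b) (hc : 0 < c) (P Q R : ℕ × ℕ)
    (hP : P ∈ ADset a b c) (hQ : Q ∈ ADset a b c) (hR : R ∈ ADset a b c)
    (hQ1 : (Q.1 + 1, Q.2) ∉ ADset a b c) (hQ2 : (Q.1, Q.2 + 1) ∉ ADset a b c)
    (hPQ : Q.1 < P.1) (hRQ : Q.2 < R.2) : False := by
  set Z₁ : ℕ × ℕ := (Q.1 + 1, Q.2) with hZ₁
  set Z₂ : ℕ × ℕ := (Q.1, Q.2 + 1) with hZ₂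
  -- minimum of class of Z₁
  obtain ⟨U, hUc, hUmin⟩ := exists_min b c hb hc {q | aval b c q % a = aval b c Z₁ % a} ⟨Z₁, rfl⟩
  have hUD : U ∈ ADset a b c := min_mem_ADset a b c U _ (by rw [hUc]) hUc hUmin
  have hUprec : aprec b c U Z₁ := by
    rcases hUmin Z₁ rfl with h | h
    · exact absurd (h ▸ hUD) hQ1
    · exact h
  obtain ⟨V, hVc, hVmin⟩ := exists_min b c hb hc {q | aval b c q % a = aval b c Z₂ % a} ⟨Z₂, rfl⟩
  have hVD : V ∈ ADset a b c := min_mem_ADset a b c V _ (by rw [hVc]) hVc hVmin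
  have hVprec : aprec b c V Z₂ := by
    rcases hVmin Z₂ rfl with h | h
    · exact absurd (h ▸ hVD) hQ2
    · exact h
  -- U.1 = 0
  have hU1 : U.1 = 0 := by
    by_contra h
    exact swap_lemma a b c Q Z₁ U hQ hUprec hUc (by simp only [hZ₁]; omega)
      (by simp only [hZ₁]; omega)
  have hV2 : V.2 = 0 := by
    by_contra h
    exact swap_lemma a b c Q Z₂ V hQ hVprec hVc (by simp only [hZ₂]; omega)
      (by simp only [hZ₂]; omega)
  have hU2 : P.2 + U.2 < Q.2 := by
    by_contra h
    exact swap_lemma a b c P Z₁ U hP hUprec hUc (by simp only [hZ₁]; omega)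
      (by simp only [hZ₁]; omega)
  have hV1 : R.1 + V.1 < Q.1 := by
    by_contra h
    exact swap_lemma a b c R Z₂ V hR hVprec hVc (by simp only [hZ₂]; omega)
      (by simp only [hZ₂]; omega)
  set G : ℕ × ℕ := (Q.1, Q.2 + 1 + U.2) with hG
  set H : ℕ × ℕ := (Q.1 + 1 + V.1, Q.2) with hH
  have hvG : aval b c G = aval b c Z₂ + aval b c U := by
    simp only [aval, hG, hZ₂]
    rw [hU1]; ring
  have hvH : aval b c H = aval b c Z₁ + aval b c V := by
    simp only [aval, hH, hZ₁]
    rw [hV2]; ring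
  have hGH : aval b c G % a = aval b c H % a := by
    rw [hvG, hvH]
    calc aval b c Z₂ + aval b c U ≡ aval b c Z₂ + aval b c Z₁ [MOD a] :=
          Nat.ModEq.add_left _ hUc
      _ ≡ aval b c V + aval b c Z₁ [MOD a] := Nat.ModEq.add_right _ (hVc.symm)
      _ = aval b c Z₁ + aval b c V := by ring
  rcases le_or_gt (aval b c G) (aval b c H) with hle | hlt
  · have hprec : aprec b c G H := by
      rcases Nat.lt_or_ge (aval b c G) (aval b c H) with h | h
      · exact Or.inl h
      · exact Or.inr ⟨by omega, by simp only [hG, hH]; omega⟩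
    exact swap_lemma a b c P H G hP hprec hGH (by simp only [hG, hH]; omega)
      (by simp only [hG, hH]; omega)
  · exact swap_lemma a b c R G H hR (Or.inl hlt) hGH.symm
      (by simp only [hG, hH]; omega) (by simp only [hG, hH]; omega)

lemma aval_snd_le (b c : ℕ) (hc : 0 < c) (p : ℕ × ℕ) : p.2 ≤ aval b c p := by
  have : p.2 ≤ c * p.2 := Nat.le_mul_of_pos_left _ hc
  simp only [aval]; omega

def IsMaxD (a b c : ℕ) (z : ℕ × ℕ) : Prop :=
  z ∈ ADset a b c ∧ (z.1 + 1, z.2) ∉ ADset a b c ∧ (z.1, z.2 + 1) ∉ ADset a b c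

lemma main_count (a b c F : ℕ) (ha : 0 < a) (hb : 0 < b) (hc : 0 < c)
    (hmin : ∀ i : ℕ, ∃ p, p ∈ ADset a b c ∧ aval b c p % a = i % a)
    (hbound : ∀ p ∈ ADset a b c, aval b c p ≤ F + a) :
    ∃ u₁ v₁ u₂ v₂ : ℕ, u₂ ≤ u₁ ∧ v₁ ≤ v₂ ∧
      b * u₁ + c * v₁ ≤ F + a + b + c ∧ b * u₂ + c * v₂ ≤ F + a + b + c ∧
      a + u₂ * v₁ ≤ u₁ * v₁ + u₂ * v₂ := by
  classical
  set m := F + a with hm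
  have hco1 : ∀ p ∈ ADset a b c, p.1 ≤ m := fun p hp =>
    le_trans (aval_fst_le b c hb p) (hbound p hp)
  have hco2 : ∀ p ∈ ADset a b c, p.2 ≤ m := fun p hp =>
    le_trans (aval_snd_le b c hc p) (hbound p hp)
  have above : ∀ k (p : ℕ × ℕ), p ∈ ADset a b c → 2 * m ≤ p.1 + p.2 + k →
      ∃ z, IsMaxD a b c z ∧ p.1 ≤ z.1 ∧ p.2 ≤ z.2 := by
    intro k
    induction k with
    | zero =>
      intro p hp hk
      have h1 := hco1 p hp
      have h2 := hco2 p hp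
      refine ⟨p, ⟨hp, ?_, ?_⟩, le_refl _, le_refl _⟩
      · intro hmem
        have := hco1 _ hmem
        have h3 : (p.1 + 1, p.2).1 ≤ m := this
        omega
      · intro hmem
        have := hco2 _ hmem
        have h3 : (p.1, p.2 + 1).2 ≤ m := this
        omega
    | succ k ih =>
      intro p hp hk
      by_cases hA : (p.1 + 1, p.2) ∈ ADset a b c
      · obtain ⟨z, hz, h1, h2⟩ := ih (p.1 + 1, p.2) hA (by show 2 * m ≤ p.1 + 1 + p.2 + k; omega)
        have h1' : p.1 + 1 ≤ z.1 := h1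
        have h2' : p.2 ≤ z.2 := h2
        exact ⟨z, hz, by omega, h2'⟩
      · by_cases hB : (p.1, p.2 + 1) ∈ ADset a b c
        · obtain ⟨z, hz, h1, h2⟩ := ih (p.1, p.2 + 1) hB (by show 2 * m ≤ p.1 + (p.2 + 1) + k; omega)
          have h1' : p.1 ≤ z.1 := h1
          have h2' : p.2 + 1 ≤ z.2 := h2
          exact ⟨z, hz, h1', by omega⟩
        · exact ⟨p, ⟨hp, hA, hB⟩, le_refl _, le_refl _⟩
  obtain ⟨p₀, hp₀, _⟩ := hmin 0
  set MF : Finset (ℕ × ℕ) :=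
    ((Finset.range (m + 1)) ×ˢ (Finset.range (m + 1))).filter (fun z => IsMaxD a b c z) with hMF
  have mem_MF : ∀ z, IsMaxD a b c z → z ∈ MF := by
    intro z hz
    rw [hMF]
    rw [Finset.mem_filter, Finset.mem_product, Finset.mem_range, Finset.mem_range]
    exact ⟨⟨by have := hco1 z hz.1; omega, by have := hco2 z hz.1; omega⟩, hz⟩
  have hMFne : MF.Nonempty := by
    obtain ⟨z, hz, _, _⟩ := above (2 * m) p₀ hp₀ (by omega)
    exact ⟨z, mem_MF z hz⟩
  obtain ⟨M₁, hM₁mem, hM₁max⟩ := Finset.exists_max_image MF (fun z => z.1) hMFne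
  obtain ⟨M₂, hM₂mem, hM₂max⟩ := Finset.exists_max_image MF (fun z => z.2) hMFne
  have hM₁ : IsMaxD a b c M₁ := (Finset.mem_filter.mp hM₁mem).2
  have hM₂ : IsMaxD a b c M₂ := (Finset.mem_filter.mp hM₂mem).2
  have hM21 : M₂.1 ≤ M₁.1 := hM₁max M₂ hM₂mem
  have hM12 : M₁.2 ≤ M₂.2 := hM₂max M₁ hM₁mem
  have cover : ∀ p ∈ ADset a b c,
      (p.1 ≤ M₁.1 ∧ p.2 ≤ M₁.2) ∨ (p.1 ≤ M₂.1 ∧ p.2 ≤ M₂.2) := by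
    intro p hp
    obtain ⟨z, hz, hz1, hz2⟩ := above (2 * m) p hp (by omega)
    have hzM1 : z.1 ≤ M₁.1 := hM₁max z (mem_MF z hz)
    have hzM2 : z.2 ≤ M₂.2 := hM₂max z (mem_MF z hz)
    by_cases hA : z.2 ≤ M₁.2
    · exact Or.inl ⟨le_trans hz1 hzM1, le_trans hz2 hA⟩
    · by_cases hB : z.1 ≤ M₂.1
      · exact Or.inr ⟨le_trans hz1 hB, le_trans hz2 hzM2⟩
      · exfalso
        push_neg at hA hB
        have hs1 : z.1 < M₁.1 := by
          rcases Nat.lt_or_ge z.1 M₁.1 with h | h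
          · exact h
          · exfalso
            have he : z.1 = M₁.1 := by omega
            exact hM₁.2.2 (adset_downward a b c z (M₁.1, M₁.2 + 1) hz.1 (by omega) (by omega))
        have hs2 : z.2 < M₂.2 := by
          rcases Nat.lt_or_ge z.2 M₂.2 with h | h
          · exact h
          · exfalso
            have he : z.2 = M₂.2 := by omega
            exact hM₂.2.1 (adset_downward a b c z (M₂.1 + 1, M₂.2) hz.1 (by omega) (by omega))
        exact no_three a b c hb hc M₁ z M₂ hM₁.1 hz.1 hM₂.1 hz.2.1 hz.2.2 hs1 hs2
  -- injection from residues
  choose f hfD hfmod using hmin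
  set B₁ : Finset (ℕ × ℕ) := Finset.range (M₁.1 + 1) ×ˢ Finset.range (M₁.2 + 1) with hB₁
  set B₂ : Finset (ℕ × ℕ) := Finset.range (M₂.1 + 1) ×ˢ Finset.range (M₂.2 + 1) with hB₂
  set B₃ : Finset (ℕ × ℕ) := Finset.range (M₂.1 + 1) ×ˢ Finset.range (M₁.2 + 1) with hB₃
  have hmaps : ∀ i ∈ Finset.range a, f i ∈ B₁ ∪ B₂ := by
    intro i _
    rcases cover (f i) (hfD i) with ⟨h1, h2⟩ | ⟨h1, h2⟩
    · apply Finset.mem_union_left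
      rw [hB₁, Finset.mem_product, Finset.mem_range, Finset.mem_range]
      exact ⟨by omega, by omega⟩
    · apply Finset.mem_union_right
      rw [hB₂, Finset.mem_product, Finset.mem_range, Finset.mem_range]
      exact ⟨by omega, by omega⟩
  have hinj : Set.InjOn f (Finset.range a) := by
    intro i hi j hj hij
    rw [Finset.coe_range, Set.mem_Iio] at hi hj
    have h1 : i % a = j % a := by
      rw [← hfmod i, ← hfmod j, hij]
    rwa [Nat.mod_eq_of_lt hi, Nat.mod_eq_of_lt hj] at h1
  have hcard1 : a ≤ (B₁ ∪ B₂).card := by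
    have := Finset.card_le_card_of_injOn f hmaps hinj
    rwa [Finset.card_range] at this
  have hcard2 : (B₁ ∪ B₂).card + (B₁ ∩ B₂).card = B₁.card + B₂.card :=
    Finset.card_union_add_card_inter B₁ B₂
  have hsub3 : B₃ ⊆ B₁ ∩ B₂ := by
    intro p hp
    rw [hB₃, Finset.mem_product, Finset.mem_range, Finset.mem_range] at hp
    rw [Finset.mem_inter, hB₁, hB₂, Finset.mem_product, Finset.mem_product,
      Finset.mem_range, Finset.mem_range, Finset.mem_range, Finset.mem_range]
    exact ⟨⟨by omega, by omega⟩, ⟨by omega, by omega⟩⟩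
  have hcard3 : (M₂.1 + 1) * (M₁.2 + 1) ≤ (B₁ ∩ B₂).card := by
    have h := Finset.card_le_card hsub3
    rwa [hB₃, Finset.card_product, Finset.card_range, Finset.card_range] at h
  have hcB₁ : B₁.card = (M₁.1 + 1) * (M₁.2 + 1) := by
    rw [hB₁, Finset.card_product, Finset.card_range, Finset.card_range]
  have hcB₂ : B₂.card = (M₂.1 + 1) * (M₂.2 + 1) := by
    rw [hB₂, Finset.card_product, Finset.card_range, Finset.card_range]
  refine ⟨M₁.1 + 1, M₁.2 + 1, M₂.1 + 1, M₂.2 + 1, by omega, by omega, ?_, ?_, by omega⟩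
  · have h := hbound M₁ hM₁.1
    have e : b * (M₁.1 + 1) + c * (M₁.2 + 1) = aval b c M₁ + b + c := by
      simp only [aval]; ring
    omega
  · have h := hbound M₂ hM₂.1
    have e : b * (M₂.1 + 1) + c * (M₂.2 + 1) = aval b c M₂ + b + c := by
      simp only [aval]; ring
    omega

lemma gen3_ge (d₁ d₂ d₃ : ℕ) (h1 : 0 < d₁) (h2 : 0 < d₂) (h3 : 0 < d₃)
    (hg : Nat.gcd d₁ (Nat.gcd d₂ d₃) = 1) (n : ℕ)
    (hn : d₁ * Nat.gcd d₂ d₃ + d₂ * d₃ ≤ n) : n ∈ gen3 d₁ d₂ d₃ := by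
  set g := Nat.gcd d₂ d₃ with hgdef
  have hgpos : 0 < g := Nat.gcd_pos_of_pos_left _ h2
  have hco : Nat.Coprime d₁ g := hg
  obtain ⟨α, hαlt, hαmod⟩ := zmod_solve d₁ g n hgpos hco
  have h4 : d₁ * α + d₁ ≤ d₁ * g := by
    have h5 : d₁ * (α + 1) ≤ d₁ * g := Nat.mul_le_mul_left d₁ hαlt
    have h6 : d₁ * (α + 1) = d₁ * α + d₁ := by ring
    omega
  have hle : d₁ * α ≤ n := by omega
  have hdvd : g ∣ n - d₁ * α := (Nat.modEq_iff_dvd' hle).mp hαmod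
  have hbc : d₂ * d₃ ≤ n - d₁ * α := by omega
  obtain ⟨x, y, hxy⟩ := repr_gcd d₂ d₃ (n - d₁ * α) h2 h3 hdvd hbc
  refine ⟨α, x, y, ?_⟩
  rw [mul_comm α d₁, mul_comm x d₂, mul_comm y d₃]
  omega

lemma class_nonempty (d₁ d₂ d₃ : ℕ) (h1 : 0 < d₁) (h2 : 0 < d₂) (h3 : 0 < d₃)
    (hg : Nat.gcd d₁ (Nat.gcd d₂ d₃) = 1) (i : ℕ) :
    ∃ p : ℕ × ℕ, aval d₂ d₃ p % d₁ = i % d₁ := by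
  set g := Nat.gcd d₂ d₃ with hgdef
  have hgpos : 0 < g := Nat.gcd_pos_of_pos_left _ h2
  have hco : Nat.Coprime g d₁ := (Nat.Coprime.symm (hg : Nat.Coprime d₁ g))
  obtain ⟨k, _, hk⟩ := zmod_solve g d₁ i h1 hco
  set N := g * k + d₁ * (d₂ * d₃) with hN
  have hdvd : g ∣ N := by
    apply dvd_add (dvd_mul_right g k)
    exact ((Nat.gcd_dvd_left d₂ d₃).trans (dvd_mul_right d₂ d₃)).trans (dvd_mul_left _ d₁)
  have hBC : d₂ * d₃ ≤ N := by
    have := Nat.le_mul_of_pos_left (d₂ * d₃) h1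
    omega
  obtain ⟨x, y, hxy⟩ := repr_gcd d₂ d₃ N h2 h3 hdvd hBC
  refine ⟨(x, y), ?_⟩
  have e : aval d₂ d₃ (x, y) = N := by simp only [aval]; omega
  rw [e, hN, Nat.add_mul_mod_self_left]
  exact hk

lemma quad_bound (m A B C D : ℤ) (hA : 0 ≤ A) (hB : 0 ≤ B) (hC : 0 ≤ C) (hD : 0 ≤ D)
    (h1 : A + B ≤ m) (h2 : C + D ≤ m) :
    3 * (A * B) + 3 * (C * D) ≤ m ^ 2 + 3 * (C * B) := by
  nlinarith [mul_nonneg hB (by linarith : (0:ℤ) ≤ m - A - B),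
    mul_nonneg hC (by linarith : (0:ℤ) ≤ m - C - D),
    sq_nonneg (2 * m - 3 * B - 3 * C), sq_nonneg (B - C)]

lemma davison_arith (d1 d2 d3 u1 v1 u2 v2 m : ℤ)
    (hd2 : 0 ≤ d2) (hd3 : 0 ≤ d3) (hu1 : 0 ≤ u1) (hv1 : 0 ≤ v1) (hu2 : 0 ≤ u2) (hv2 : 0 ≤ v2)
    (h1 : d2 * u1 + d3 * v1 ≤ m) (h2 : d2 * u2 + d3 * v2 ≤ m)
    (hA : d1 + u2 * v1 ≤ u1 * v1 + u2 * v2) : 3 * d1 * d2 * d3 ≤ m ^ 2 := by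
  have key := quad_bound m (d2 * u1) (d3 * v1) (d2 * u2) (d3 * v2)
    (by positivity) (by positivity) (by positivity) (by positivity) h1 h2
  have hbc : (0 : ℤ) ≤ 3 * (d2 * d3) := by positivity
  have hscaled := mul_le_mul_of_nonneg_left hA hbc
  nlinarith [key, hscaled]

lemma conclude_arith (d1 d2 d3 F : ℤ) (h1 : 3 ≤ d1) (h12 : d1 < d2) (h23 : d2 < d3)
    (hF : 0 ≤ F) (h3abc : 3 * d1 * d2 * d3 ≤ (F + d1 + d2 + d3) ^ 2)
    (hrho : 3 * (d1 + d2 + d3) ^ 2 < 4 * (d1 * d2 * d3)) :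
    d1 + d2 + d3 - 1 < 2 * (F + 1) := by
  by_contra hcon
  push_neg at hcon
  have hm : 2 * (F + d1 + d2 + d3) ≤ 3 * (d1 + d2 + d3) - 3 := by linarith
  have hmn : (0:ℤ) ≤ 2 * (F + d1 + d2 + d3) := by linarith
  have hsq := mul_le_mul hm hm hmn (by linarith)
  nlinarith [hsq, h3abc, hrho]

set_option maxHeartbeats 1000000 in
theorem e3_lt_one (d₁ d₂ d₃ : ℕ) (h : MinGen3 d₁ d₂ d₃) (h4 : 4 ≤ d₁)
    (hρ : 3 * (d₁ + d₂ + d₃) ^ 2 < 4 * (d₁ * d₂ * d₃)) :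
    (((d₁ : ℝ) + d₂ + d₃ - 1) / 2) / ((frobeniusNum (gen3 d₁ d₂ d₃) : ℝ) + 1) < 1 ∧
      (d₁ : ℤ) + d₂ + d₃ - 1 < 2 * ((frobeniusNum (gen3 d₁ d₂ d₃) : ℤ) + 1) := by
  obtain ⟨h3, h12, h23, hsum, hgcd, -, -, -⟩ := h
  have h1 : 0 < d₁ := by omega
  have h2 : 0 < d₂ := by omega
  have h3' : 0 < d₃ := by omega
  set S := gen3 d₁ d₂ d₃ with hS
  set F := frobeniusNum S with hFdef
  have hfin : (Sᶜ : Set ℕ).Finite := by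
    apply Set.Finite.subset (Set.finite_Iio (d₁ * Nat.gcd d₂ d₃ + d₂ * d₃))
    intro n hn
    rw [Set.mem_Iio]
    by_contra hcon
    push_neg at hcon
    exact hn (gen3_ge d₁ d₂ d₃ h1 h2 h3' hgcd n hcon)
  have hF : ∀ n, F < n → n ∈ S := by
    intro n hn
    by_contra hmem
    have h := le_csSup hfin.bddAbove (hmem : n ∈ (Sᶜ : Set ℕ))
    rw [hFdef] at hn
    unfold frobeniusNum at hn
    omega
  have hbound : ∀ p ∈ ADset d₁ d₂ d₃, aval d₂ d₃ p ≤ F + d₁ :=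
    fun p hp => apery_bound d₁ d₂ d₃ F h1 hF p hp
  have hmin : ∀ i : ℕ, ∃ p, p ∈ ADset d₁ d₂ d₃ ∧ aval d₂ d₃ p % d₁ = i % d₁ := by
    intro i
    obtain ⟨w, hw⟩ := class_nonempty d₁ d₂ d₃ h1 h2 h3' hgcd i
    obtain ⟨p, hpC, hpmin⟩ := exists_min d₂ d₃ h2 h3'
      {q | aval d₂ d₃ q % d₁ = i % d₁} ⟨w, hw⟩
    have hpv : aval d₂ d₃ p % d₁ = i % d₁ := hpC
    refine ⟨p, min_mem_ADset d₁ d₂ d₃ p _ ?_ hpC hpmin, hpv⟩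
    rw [hpv]
  obtain ⟨u₁, v₁, u₂, v₂, h21, h12', hV1, hV2, hA⟩ :=
    main_count d₁ d₂ d₃ F h1 h2 h3' hmin hbound
  have hρZ : 3 * ((d₁ : ℤ) + d₂ + d₃) ^ 2 < 4 * ((d₁ : ℤ) * d₂ * d₃) := by exact_mod_cast hρ
  have hZ1 : (d₂ : ℤ) * u₁ + (d₃ : ℤ) * v₁ ≤ (F : ℤ) + d₁ + d₂ + d₃ := by exact_mod_cast hV1
  have hZ2 : (d₂ : ℤ) * u₂ + (d₃ : ℤ) * v₂ ≤ (F : ℤ) + d₁ + d₂ + d₃ := by exact_mod_cast hV2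
  have hZA : (d₁ : ℤ) + (u₂ : ℤ) * (v₁ : ℤ) ≤ (u₁ : ℤ) * v₁ + (u₂ : ℤ) * v₂ := by exact_mod_cast hA
  have h3abc := davison_arith (d₁ : ℤ) (d₂ : ℤ) (d₃ : ℤ) (u₁ : ℤ) (v₁ : ℤ) (u₂ : ℤ) (v₂ : ℤ)
    ((F : ℤ) + d₁ + d₂ + d₃) (by positivity) (by positivity) (by positivity) (by positivity)
    (by positivity) (by positivity) hZ1 hZ2 hZA
  have hgoal2 : (d₁ : ℤ) + d₂ + d₃ - 1 < 2 * ((F : ℤ) + 1) :=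
    conclude_arith (d₁ : ℤ) (d₂ : ℤ) (d₃ : ℤ) (F : ℤ) (by exact_mod_cast h3)
      (by exact_mod_cast h12) (by exact_mod_cast h23) (Int.ofNat_nonneg F) h3abc hρZ
  refine ⟨?_, hgoal2⟩
  have hpos : (0 : ℝ) < (F : ℝ) + 1 := by positivity
  rw [div_lt_one hpos]
  have hcast : ((d₁ : ℝ) + d₂ + d₃ - 1) < 2 * ((F : ℝ) + 1) := by exact_mod_cast hgoal2
  linarith
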